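/- arXiv:2602.17430 — 3 statements merged into one kernel-verified Lean document; each statement's English description precedes it below -/
import Mathlib

section
/- Let A₁, …, A_m be positive semidefinite operators on a finite-dimensional complex Hilbert space H and let λ > 0. Then tr((∑ᵢ Aᵢ − λ·I)₊) ≥ ∑ᵢ tr((Aᵢ − λ·I)₊), where (X)₊ denotes the positive part of a self-adjoint operator X (the sum of its nonnegative eigenvalues times corresponding spectral projections). -/
open Matrix
open scoped ComplexOrder

/-- The trace of the positive part of a Hermitian matrix: the sum of its
nonnegative eigenvalues (junk value `0` for non-Hermitian input). -/
noncomputable def posPartTrace {n : ℕ} (A : Matrix (Fin n) (Fin n) ℂ) : ℝ :=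
  if h : A.IsHermitian then ∑ i, max (h.eigenvalues i) 0 else 0

namespace PPTAux

variable {n : ℕ}

lemma uconj_mul (V : Matrix.unitaryGroup (Fin n) ℂ) (c d : Fin n → ℂ) :
    ((V : Matrix (Fin n) (Fin n) ℂ) * diagonal c * star (V : Matrix (Fin n) (Fin n) ℂ)) *
      ((V : Matrix (Fin n) (Fin n) ℂ) * diagonal d * star (V : Matrix (Fin n) (Fin n) ℂ)) =
      (V : Matrix (Fin n) (Fin n) ℂ) * diagonal (c * d) * star (V : Matrix (Fin n) (Fin n) ℂ) := by
  have h : star (V : Matrix (Fin n) (Fin n) ℂ) * (V : Matrix (Fin n) (Fin n) ℂ) = 1 :=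
    Unitary.coe_star_mul_self V
  calc ((V : Matrix (Fin n) (Fin n) ℂ) * diagonal c * star (V : Matrix (Fin n) (Fin n) ℂ)) *
      ((V : Matrix (Fin n) (Fin n) ℂ) * diagonal d * star (V : Matrix (Fin n) (Fin n) ℂ))
      = (V : Matrix (Fin n) (Fin n) ℂ) * (diagonal c *
        ((star (V : Matrix (Fin n) (Fin n) ℂ) * (V : Matrix (Fin n) (Fin n) ℂ)) * diagonal d)) *
        star (V : Matrix (Fin n) (Fin n) ℂ) := by
        simp only [Matrix.mul_assoc]
    _ = (V : Matrix (Fin n) (Fin n) ℂ) * diagonal (c * d) * star (V : Matrix (Fin n) (Fin n) ℂ) := by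
        rw [h, one_mul, diagonal_mul_diagonal]
        rfl

lemma uconj_trace (V : Matrix.unitaryGroup (Fin n) ℂ) (c : Fin n → ℂ) :
    ((V : Matrix (Fin n) (Fin n) ℂ) * diagonal c * star (V : Matrix (Fin n) (Fin n) ℂ)).trace
      = ∑ j, c j := by
  rw [Matrix.trace_mul_cycle, Unitary.coe_star_mul_self V, one_mul, Matrix.trace_diagonal]

lemma uconj_one (V : Matrix.unitaryGroup (Fin n) ℂ) :
    (V : Matrix (Fin n) (Fin n) ℂ) * diagonal (fun _ => (1:ℂ)) * star (V : Matrix (Fin n) (Fin n) ℂ) = 1 := by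
  have : diagonal (fun _ : Fin n => (1:ℂ)) = 1 := Matrix.diagonal_one
  rw [this, mul_one, Matrix.mem_unitaryGroup_iff.mp V.2]

lemma uconj_posSemidef (V : Matrix.unitaryGroup (Fin n) ℂ) (c : Fin n → ℝ) (hc : ∀ j, 0 ≤ c j) :
    ((V : Matrix (Fin n) (Fin n) ℂ) * diagonal (fun j => (c j : ℂ)) *
      star (V : Matrix (Fin n) (Fin n) ℂ)).PosSemidef := by
  have h : (diagonal (fun j => (c j : ℂ))).PosSemidef := by
    refine posSemidef_diagonal_iff.mpr fun j => ?_
    exact_mod_cast Complex.real_le_real.mpr (hc j) |>.trans_eq rfl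
  simpa [Matrix.star_eq_conjTranspose] using h.mul_mul_conjTranspose_same
    (V : Matrix (Fin n) (Fin n) ℂ)

lemma uconj_rank (V : Matrix.unitaryGroup (Fin n) ℂ) (c : Fin n → ℂ) :
    ((V : Matrix (Fin n) (Fin n) ℂ) * diagonal c * star (V : Matrix (Fin n) (Fin n) ℂ)).rank
      = (diagonal c).rank := by
  have h1 : IsUnit (V : Matrix (Fin n) (Fin n) ℂ).det := by
    apply IsUnit.of_mul_eq_one (star (V : Matrix (Fin n) (Fin n) ℂ)).det
    rw [← Matrix.det_mul, Matrix.mem_unitaryGroup_iff.mp V.2, Matrix.det_one]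
  have h2 : IsUnit (star (V : Matrix (Fin n) (Fin n) ℂ)).det := by
    apply IsUnit.of_mul_eq_one (V : Matrix (Fin n) (Fin n) ℂ).det
    rw [← Matrix.det_mul, Unitary.coe_star_mul_self V, Matrix.det_one]
  rw [Matrix.rank_mul_eq_left_of_isUnit_det _ _ h2,
    Matrix.rank_mul_eq_right_of_isUnit_det _ _ h1]

lemma uconj_one_sub (V : Matrix.unitaryGroup (Fin n) ℂ) (c : Fin n → ℂ) :
    1 - (V : Matrix (Fin n) (Fin n) ℂ) * diagonal c * star (V : Matrix (Fin n) (Fin n) ℂ)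
      = (V : Matrix (Fin n) (Fin n) ℂ) * diagonal (fun j => 1 - c j) *
        star (V : Matrix (Fin n) (Fin n) ℂ) := by
  have h1 := uconj_one V
  calc (1 : Matrix (Fin n) (Fin n) ℂ) -
      (V : Matrix (Fin n) (Fin n) ℂ) * diagonal c * star (V : Matrix (Fin n) (Fin n) ℂ)
      = (V : Matrix (Fin n) (Fin n) ℂ) * diagonal (fun _ => (1:ℂ)) *
          star (V : Matrix (Fin n) (Fin n) ℂ) -
        (V : Matrix (Fin n) (Fin n) ℂ) * diagonal c * star (V : Matrix (Fin n) (Fin n) ℂ) := by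
        rw [h1]
    _ = (V : Matrix (Fin n) (Fin n) ℂ) * (diagonal (fun _ => (1:ℂ)) - diagonal c) *
        star (V : Matrix (Fin n) (Fin n) ℂ) := by
        rw [Matrix.mul_sub, Matrix.sub_mul]
    _ = _ := by rw [Matrix.diagonal_sub]

/-- diagonal real part lemmas for PSD matrices -/
lemma diag_nonneg {M : Matrix (Fin n) (Fin n) ℂ} (hM : M.PosSemidef) (j : Fin n) :
    0 ≤ M j j := by
  have h := hM.dotProduct_mulVec_nonneg (Pi.single j 1)
  have h2 : star (Pi.single j 1 : Fin n → ℂ) ⬝ᵥ (M *ᵥ Pi.single j 1) = M j j := by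
    simp [dotProduct, Pi.single_apply, Matrix.mulVec, apply_ite (star : ℂ → ℂ),
      Finset.sum_ite_eq, mul_comm]
  rwa [h2] at h

lemma diag_re_nonneg {M : Matrix (Fin n) (Fin n) ℂ} (hM : M.PosSemidef) (j : Fin n) :
    0 ≤ (M j j).re :=
  (Complex.le_def.mp (diag_nonneg hM j)).1

lemma trace_re_nonneg {M : Matrix (Fin n) (Fin n) ℂ} (hM : M.PosSemidef) :
    0 ≤ M.trace.re := by
  rw [Matrix.trace, Complex.re_sum]
  exact Finset.sum_nonneg fun j _ => diag_re_nonneg hM j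

open scoped MatrixOrder in
lemma eq_zero_of_trace_re {M : Matrix (Fin n) (Fin n) ℂ} (hM : M.PosSemidef)
    (h : M.trace.re = 0) : M = 0 := by
  obtain ⟨B, rfl⟩ : ∃ B : Matrix (Fin n) (Fin n) ℂ, M = Bᴴ * B :=
    CStarAlgebra.nonneg_iff_eq_star_mul_self.mp hM.nonneg
  have hB : B = 0 := by
    have htr : (Bᴴ * B).trace.re = ∑ i, ∑ j, Complex.normSq (B j i) := by
      rw [Matrix.trace, Complex.re_sum]
      congr 1; ext i
      have h3 : (Bᴴ * B) i i = ∑ j, ((Complex.normSq (B j i) : ℂ)) := by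
        simp only [Matrix.mul_apply, Matrix.conjTranspose_apply, RCLike.star_def]
        congr 1; ext j
        exact (Complex.normSq_eq_conj_mul_self).symm
      rw [Matrix.diag_apply, h3, Complex.re_sum]
      simp
    rw [htr] at h
    ext j i
    have h1 := (Finset.sum_eq_zero_iff_of_nonneg (fun i _ => Finset.sum_nonneg
      (fun j _ => Complex.normSq_nonneg (B j i)))).mp h i (Finset.mem_univ i)
    have h2 := (Finset.sum_eq_zero_iff_of_nonneg (fun j _ =>
      Complex.normSq_nonneg (B j i))).mp h1 j (Finset.mem_univ j)
    simpa using Complex.normSq_eq_zero.mp h2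
  rw [hB]
  simp

open scoped MatrixOrder in
lemma trace_mul_re_nonneg {M N : Matrix (Fin n) (Fin n) ℂ} (hM : M.PosSemidef)
    (hN : N.PosSemidef) : 0 ≤ ((M * N).trace).re := by
  obtain ⟨C, rfl⟩ : ∃ C : Matrix (Fin n) (Fin n) ℂ, N = Cᴴ * C :=
    CStarAlgebra.nonneg_iff_eq_star_mul_self.mp hN.nonneg
  rw [← Matrix.mul_assoc, Matrix.trace_mul_cycle]
  exact trace_re_nonneg (hM.mul_mul_conjTranspose_same C)

/-- the main contraction bound : tr(QX).re ≤ sum of positive eigenvalues of X -/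
lemma trace_mul_re_le {X Q : Matrix (Fin n) (Fin n) ℂ} (hX : X.IsHermitian)
    (hQ : Q.PosSemidef) (hQ1 : ((1 : Matrix (Fin n) (Fin n) ℂ) - Q).PosSemidef) :
    ((Q * X).trace).re ≤ ∑ j, max (hX.eigenvalues j) 0 := by
  set V := hX.eigenvectorUnitary with hV
  set W := star (V : Matrix (Fin n) (Fin n) ℂ) with hW
  set Q' := W * Q * (V : Matrix (Fin n) (Fin n) ℂ) with hQ'def
  have hQ'psd : Q'.PosSemidef := by
    have := hQ.mul_mul_conjTranspose_same W
    simpa [hQ'def, hW, Matrix.star_eq_conjTranspose] using this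
  have hQ'1 : ((1 : Matrix (Fin n) (Fin n) ℂ) - Q').PosSemidef := by
    have h1 : (1 : Matrix (Fin n) (Fin n) ℂ) - Q' = W * (1 - Q) * (V : Matrix (Fin n) (Fin n) ℂ) := by
      rw [Matrix.mul_sub, Matrix.sub_mul, Matrix.mul_one, hW,
        Unitary.coe_star_mul_self V, hQ'def]
    rw [h1]
    have := hQ1.mul_mul_conjTranspose_same W
    simpa [hW, Matrix.star_eq_conjTranspose] using this
  have htr : (Q * X).trace = (Q' * diagonal (RCLike.ofReal ∘ hX.eigenvalues)).trace := by
    conv_lhs => rw [hX.spectral_theorem, Unitary.conjStarAlgAut_apply]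
    rw [← Matrix.mul_assoc, ← Matrix.mul_assoc, Matrix.trace_mul_cycle, hQ'def, hW]
    simp only [Matrix.mul_assoc]
    rfl
  have hdiag : ∀ j, (Q' * diagonal ((RCLike.ofReal ∘ hX.eigenvalues : Fin n → ℂ))) j j
      = Q' j j * (hX.eigenvalues j : ℂ) := by
    intro j
    rw [Matrix.mul_diagonal]
    rfl
  have hre : ((Q * X).trace).re = ∑ j, (Q' j j).re * hX.eigenvalues j := by
    rw [htr, Matrix.trace, Complex.re_sum]
    congr 1; ext j
    rw [Matrix.diag_apply, hdiag j, Complex.mul_re]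
    simp
  rw [hre]
  apply Finset.sum_le_sum
  intro j _
  have h0 : 0 ≤ (Q' j j).re := diag_re_nonneg hQ'psd j
  have h1 : (Q' j j).re ≤ 1 := by
    have h := diag_re_nonneg hQ'1 j
    simp only [Matrix.sub_apply, Complex.sub_re, Matrix.one_apply_eq, Complex.one_re] at h
    linarith
  rcases le_or_gt (hX.eigenvalues j) 0 with hd | hd
  · exact (mul_nonpos_of_nonneg_of_nonpos h0 hd).trans (le_max_right _ _)
  · calc (Q' j j).re * hX.eigenvalues j ≤ 1 * hX.eigenvalues j :=
        mul_le_mul_of_nonneg_right h1 hd.le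
    _ = hX.eigenvalues j := one_mul _
    _ ≤ max (hX.eigenvalues j) 0 := le_max_left _ _

/-! ### Spectral projections -/

lemma uconj_posSemidef' (V : Matrix.unitaryGroup (Fin n) ℂ) (c : Fin n → ℂ)
    (hc : ∀ j, 0 ≤ c j) :
    ((V : Matrix (Fin n) (Fin n) ℂ) * diagonal c *
      star (V : Matrix (Fin n) (Fin n) ℂ)).PosSemidef := by
  have h : (diagonal c).PosSemidef := posSemidef_diagonal_iff.mpr hc
  simpa [Matrix.star_eq_conjTranspose] using h.mul_mul_conjTranspose_same
    (V : Matrix (Fin n) (Fin n) ℂ)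

noncomputable def proj (V : Matrix.unitaryGroup (Fin n) ℂ) (p : Fin n → Prop)
    [DecidablePred p] : Matrix (Fin n) (Fin n) ℂ :=
  (V : Matrix (Fin n) (Fin n) ℂ) * diagonal (fun j => if p j then 1 else 0) *
    star (V : Matrix (Fin n) (Fin n) ℂ)

variable (V : Matrix.unitaryGroup (Fin n) ℂ) (p : Fin n → Prop) [DecidablePred p]

lemma proj_posSemidef : (proj V p).PosSemidef := by
  refine uconj_posSemidef' V _ fun j => ?_
  by_cases h : p j <;> simp [h]

lemma one_sub_proj_posSemidef : ((1 : Matrix (Fin n) (Fin n) ℂ) - proj V p).PosSemidef := by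
  rw [proj, uconj_one_sub]
  refine uconj_posSemidef' V _ fun j => ?_
  by_cases h : p j <;> simp [h]

lemma proj_mul_proj : proj V p * proj V p = proj V p := by
  rw [proj, uconj_mul]
  have h : ((fun j => if p j then (1:ℂ) else 0) * fun j => if p j then (1:ℂ) else 0)
      = fun j => if p j then (1:ℂ) else 0 := by
    funext j; by_cases h : p j <;> simp [h]
  rw [h]

lemma proj_isHermitian : (proj V p).IsHermitian := (proj_posSemidef V p).1

lemma proj_mul_uconj (d : Fin n → ℂ) :
    proj V p * ((V : Matrix (Fin n) (Fin n) ℂ) * diagonal d *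
      star (V : Matrix (Fin n) (Fin n) ℂ))
      = (V : Matrix (Fin n) (Fin n) ℂ) * diagonal (fun j => if p j then d j else 0) *
        star (V : Matrix (Fin n) (Fin n) ℂ) := by
  rw [proj, uconj_mul]
  have h : ((fun j => if p j then (1:ℂ) else 0) * d) = fun j => if p j then d j else 0 := by
    funext j; by_cases h : p j <;> simp [h]
  rw [h]

lemma proj_trace_re : (proj V p).trace.re = Fintype.card {j // p j} := by
  rw [proj, uconj_trace, Complex.re_sum]
  rw [Fintype.card_subtype]
  rw [← Finset.sum_boole]
  congr 1; funext j
  by_cases h : p j <;> simp [h]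

lemma proj_rank : (proj V p).rank = Fintype.card {j // p j} := by
  rw [proj, uconj_rank, Matrix.rank_diagonal]
  apply Fintype.card_congr
  apply Equiv.subtypeEquivRight
  intro j
  by_cases h : p j <;> simp [h]

lemma rank_add_le (A B : Matrix (Fin n) (Fin n) ℂ) : (A + B).rank ≤ A.rank + B.rank := by
  have h : LinearMap.range (A + B).mulVecLin ≤
      LinearMap.range A.mulVecLin ⊔ LinearMap.range B.mulVecLin := by
    rintro x ⟨y, rfl⟩
    rw [Matrix.mulVecLin_add]
    exact Submodule.add_mem_sup ⟨y, rfl⟩ ⟨y, rfl⟩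
  exact le_trans (Submodule.finrank_mono h)
    (Submodule.finrank_add_le_finrank_add_finrank _ _)

/-! ### posPartTrace basics -/

lemma posPartTrace_eq {X : Matrix (Fin n) (Fin n) ℂ} (hX : X.IsHermitian) :
    posPartTrace X = ∑ j, max (hX.eigenvalues j) 0 := by
  rw [posPartTrace, dif_pos hX]

lemma posPartTrace_nonneg (X : Matrix (Fin n) (Fin n) ℂ) : 0 ≤ posPartTrace X := by
  rw [posPartTrace]
  split
  · exact Finset.sum_nonneg fun j _ => le_max_right _ _
  · exact le_refl 0

lemma isHermitian_sub_smul {A : Matrix (Fin n) (Fin n) ℂ} (hA : A.IsHermitian) (lam : ℝ) :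
    (A - (lam : ℂ) • (1 : Matrix (Fin n) (Fin n) ℂ)).IsHermitian := by
  refine hA.sub ?_
  simp [Matrix.IsHermitian, Matrix.conjTranspose_smul, Complex.star_def, Complex.conj_ofReal]

/-- the positive spectral projection witnesses the positive part trace -/
lemma proj_mul_trace_re {X : Matrix (Fin n) (Fin n) ℂ} (hX : X.IsHermitian) :
    ((proj hX.eigenvectorUnitary (fun j => 0 ≤ hX.eigenvalues j) * X).trace).re
      = ∑ j, max (hX.eigenvalues j) 0 := by
  have h0 : ((proj hX.eigenvectorUnitary (fun j => 0 ≤ hX.eigenvalues j) * X).trace).re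
      = ((proj hX.eigenvectorUnitary (fun j => 0 ≤ hX.eigenvalues j) *
        ((hX.eigenvectorUnitary : Matrix (Fin n) (Fin n) ℂ) *
          diagonal (RCLike.ofReal ∘ hX.eigenvalues) *
          star (hX.eigenvectorUnitary : Matrix (Fin n) (Fin n) ℂ))).trace).re :=
    congrArg (fun M : Matrix (Fin n) (Fin n) ℂ =>
      ((proj hX.eigenvectorUnitary (fun j => 0 ≤ hX.eigenvalues j) * M).trace).re)
      hX.spectral_theorem
  rw [h0, proj_mul_uconj, uconj_trace, Complex.re_sum]
  congr 1; funext j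
  by_cases h : 0 ≤ hX.eigenvalues j
  · simp only [h, if_pos]
    rw [max_eq_left h]
    rfl
  · simp only [h, if_neg, not_false_iff]
    rw [max_eq_right (le_of_not_ge h)]
    simp

/-! ### The two-matrix key lemma -/

lemma key {A B : Matrix (Fin n) (Fin n) ℂ} (hA : A.PosSemidef) (hB : B.PosSemidef)
    (lam : ℝ) (hlam : 0 ≤ lam) :
    posPartTrace (A - (lam : ℂ) • 1) + posPartTrace (B - (lam : ℂ) • 1) ≤
      posPartTrace (A + B - (lam : ℂ) • 1) := by
  have hX : (A - (lam : ℂ) • (1 : Matrix (Fin n) (Fin n) ℂ)).IsHermitian :=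
    isHermitian_sub_smul hA.1 lam
  have hY : (B - (lam : ℂ) • (1 : Matrix (Fin n) (Fin n) ℂ)).IsHermitian :=
    isHermitian_sub_smul hB.1 lam
  have hZ : (A + B - (lam : ℂ) • (1 : Matrix (Fin n) (Fin n) ℂ)).IsHermitian :=
    isHermitian_sub_smul (hA.1.add hB.1) lam
  set X := A - (lam : ℂ) • (1 : Matrix (Fin n) (Fin n) ℂ) with hXdef
  set Y := B - (lam : ℂ) • (1 : Matrix (Fin n) (Fin n) ℂ) with hYdef
  set P := proj hX.eigenvectorUnitary (fun j => 0 ≤ hX.eigenvalues j) with hPdef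
  set P' := proj hY.eigenvectorUnitary (fun j => 0 ≤ hY.eigenvalues j) with hP'def
  have hPpsd : P.PosSemidef := proj_posSemidef _ _
  have hP'psd : P'.PosSemidef := proj_posSemidef _ _
  have hPP : P * P = P := proj_mul_proj _ _
  have hP'P' : P' * P' = P' := proj_mul_proj _ _
  set S := P + P' with hSdef
  have hS : S.IsHermitian := hPpsd.1.add hP'psd.1
  set Q := proj hS.eigenvectorUnitary (fun j => hS.eigenvalues j ≠ 0) with hQdef
  have hQpsd : Q.PosSemidef := proj_posSemidef _ _
  have hQ1 : ((1 : Matrix (Fin n) (Fin n) ℂ) - Q).PosSemidef := one_sub_proj_posSemidef _ _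
  have hQQ : Q * Q = Q := proj_mul_proj _ _
  -- Q fixes S
  have hQS : Q * S = S := by
    have hfun : (fun j => if hS.eigenvalues j ≠ 0 then
        ((RCLike.ofReal ∘ hS.eigenvalues : Fin n → ℂ)) j else 0)
        = (RCLike.ofReal ∘ hS.eigenvalues : Fin n → ℂ) := by
      funext j
      by_cases h : hS.eigenvalues j = 0 <;> simp [h, Function.comp]
    have h0 : Q * S = Q * ((hS.eigenvectorUnitary : Matrix (Fin n) (Fin n) ℂ) *
        diagonal (RCLike.ofReal ∘ hS.eigenvalues) *
        star (hS.eigenvectorUnitary : Matrix (Fin n) (Fin n) ℂ)) :=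
      congrArg (fun M : Matrix (Fin n) (Fin n) ℂ => Q * M) hS.spectral_theorem
    rw [h0, hQdef, proj_mul_uconj, hfun]
    exact hS.spectral_theorem.symm
  -- Q dominates P and P'
  have absorb : ∀ R : Matrix (Fin n) (Fin n) ℂ, R.PosSemidef → R * R = R →
      (∀ R' : Matrix (Fin n) (Fin n) ℂ, R'.PosSemidef → S = R + R' → Q * R = R) := by
    intro R hR hRR R' hR' hSRR'
    have h0 : ((1 : Matrix (Fin n) (Fin n) ℂ) - Q) * S = 0 := by
      rw [Matrix.sub_mul, Matrix.one_mul, hQS, sub_self]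
    have h2 : ((1:Matrix (Fin n) (Fin n) ℂ) - Q) * R * ((1:Matrix (Fin n) (Fin n) ℂ) - Q)ᴴ
        + ((1:Matrix (Fin n) (Fin n) ℂ) - Q) * R' * ((1:Matrix (Fin n) (Fin n) ℂ) - Q)ᴴ = 0 := by
      have h3 : ((1:Matrix (Fin n) (Fin n) ℂ) - Q) * S * ((1:Matrix (Fin n) (Fin n) ℂ) - Q)ᴴ
          = 0 := by rw [h0, Matrix.zero_mul]
      rw [hSRR', Matrix.mul_add, Matrix.add_mul] at h3
      exact h3
    have hM1 : (((1:Matrix (Fin n) (Fin n) ℂ) - Q) * R *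
        ((1:Matrix (Fin n) (Fin n) ℂ) - Q)ᴴ).PosSemidef := hR.mul_mul_conjTranspose_same _
    have hM2 : (((1:Matrix (Fin n) (Fin n) ℂ) - Q) * R' *
        ((1:Matrix (Fin n) (Fin n) ℂ) - Q)ᴴ).PosSemidef := hR'.mul_mul_conjTranspose_same _
    have htr : (((1:Matrix (Fin n) (Fin n) ℂ) - Q) * R *
        ((1:Matrix (Fin n) (Fin n) ℂ) - Q)ᴴ).trace.re
        + (((1:Matrix (Fin n) (Fin n) ℂ) - Q) * R' *
        ((1:Matrix (Fin n) (Fin n) ℂ) - Q)ᴴ).trace.re = 0 := by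
      have := congrArg (fun M : Matrix (Fin n) (Fin n) ℂ => (Matrix.trace M).re) h2
      simpa [Matrix.trace_add] using this
    have hM10 : ((1:Matrix (Fin n) (Fin n) ℂ) - Q) * R *
        ((1:Matrix (Fin n) (Fin n) ℂ) - Q)ᴴ = 0 := by
      apply eq_zero_of_trace_re hM1
      have := trace_re_nonneg hM1
      have := trace_re_nonneg hM2
      linarith
    have hfac : (((1:Matrix (Fin n) (Fin n) ℂ) - Q) * R)
        * (((1:Matrix (Fin n) (Fin n) ℂ) - Q) * R)ᴴ = 0 := by
      rw [Matrix.conjTranspose_mul, hR.1.eq]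
      calc ((1:Matrix (Fin n) (Fin n) ℂ) - Q) * R * (R * ((1:Matrix (Fin n) (Fin n) ℂ) - Q)ᴴ)
          = ((1:Matrix (Fin n) (Fin n) ℂ) - Q) * (R * R) * ((1:Matrix (Fin n) (Fin n) ℂ) - Q)ᴴ := by
            simp only [Matrix.mul_assoc]
        _ = 0 := by rw [hRR]; exact hM10
    have hzero : ((1:Matrix (Fin n) (Fin n) ℂ) - Q) * R = 0 := by
      have := Matrix.conjTranspose_mul_self_eq_zero
        (A := (((1:Matrix (Fin n) (Fin n) ℂ) - Q) * R)ᴴ)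
      rw [Matrix.conjTranspose_conjTranspose] at this
      have h4 := this.mp hfac
      simpa using congrArg Matrix.conjTranspose h4
    have hexp : R - Q * R = 0 := by
      calc R - Q * R = ((1:Matrix (Fin n) (Fin n) ℂ) - Q) * R := by
            rw [Matrix.sub_mul, Matrix.one_mul]
        _ = 0 := hzero
    exact (sub_eq_zero.mp hexp).symm
  have hQP : Q * P = P := absorb P hPpsd hPP P' hP'psd rfl
  have hQP' : Q * P' = P' := absorb P' hP'psd hP'P' P hPpsd (by rw [hSdef, add_comm])
  have hPQ : P * Q = P := by
    have := congrArg Matrix.conjTranspose hQP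
    rwa [Matrix.conjTranspose_mul, hPpsd.1.eq, hQpsd.1.eq] at this
  have hP'Q : P' * Q = P' := by
    have := congrArg Matrix.conjTranspose hQP'
    rwa [Matrix.conjTranspose_mul, hP'psd.1.eq, hQpsd.1.eq] at this
  -- Q - P and Q - P' are PSD
  have hQsubP : ∀ R : Matrix (Fin n) (Fin n) ℂ, R.PosSemidef → R * R = R → Q * R = R →
      R * Q = R → (Q - R).PosSemidef := by
    intro R hR hRR hQR hRQ
    have hherm : (Q - R)ᴴ = Q - R := by
      rw [Matrix.conjTranspose_sub, hQpsd.1.eq, hR.1.eq]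
    have hidem : (Q - R)ᴴ * (Q - R) = Q - R := by
      rw [hherm, Matrix.sub_mul, Matrix.mul_sub, Matrix.mul_sub, hQQ, hQR, hRQ, hRR]
      abel
    rw [← hidem]
    exact Matrix.posSemidef_conjTranspose_mul_self _
  have hQmP := hQsubP P hPpsd hPP hQP hPQ
  have hQmP' := hQsubP P' hP'psd hP'P' hQP' hP'Q
  -- trace bound : tr Q ≤ tr P + tr P'
  have htraceQ : Q.trace.re ≤ P.trace.re + P'.trace.re := by
    rw [hQdef, proj_trace_re, hPdef, hP'def, proj_trace_re, proj_trace_re]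
    have h1 : (Fintype.card {j // hS.eigenvalues j ≠ 0} : ℝ) = (S.rank : ℝ) := by
      rw [hS.rank_eq_card_non_zero_eigs]
    rw [h1]
    have h2 : S.rank ≤ P.rank + P'.rank := rank_add_le P P'
    have h3 : (P.rank : ℝ) = Fintype.card {j // 0 ≤ hX.eigenvalues j} := by
      rw [hPdef, proj_rank]
    have h4 : (P'.rank : ℝ) = Fintype.card {j // 0 ≤ hY.eigenvalues j} := by
      rw [hP'def, proj_rank]
    rw [← h3, ← h4]
    exact_mod_cast h2
  -- trace identities
  have hPX : posPartTrace X = ((P * X).trace).re := by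
    rw [posPartTrace_eq hX, hPdef, proj_mul_trace_re hX]
  have hP'Y : posPartTrace Y = ((P' * Y).trace).re := by
    rw [posPartTrace_eq hY, hP'def, proj_mul_trace_re hY]
  -- expansion lemma
  have expand : ∀ (R C : Matrix (Fin n) (Fin n) ℂ),
      ((R * (C - (lam : ℂ) • 1)).trace).re = ((R * C).trace).re - lam * R.trace.re := by
    intro R C
    rw [Matrix.mul_sub, Matrix.trace_sub, Matrix.mul_smul, Matrix.mul_one, Matrix.trace_smul,
      Complex.sub_re, smul_eq_mul, Complex.re_ofReal_mul]
  -- the contraction bound for Z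
  have hup : ((Q * (A + B - (lam : ℂ) • 1)).trace).re ≤
      posPartTrace (A + B - (lam : ℂ) • 1) := by
    rw [posPartTrace_eq hZ]
    exact trace_mul_re_le hZ hQpsd hQ1
  -- monotonicity of tr(·A) in the projection
  have hmono : ∀ R C : Matrix (Fin n) (Fin n) ℂ, (Q - R).PosSemidef → C.PosSemidef →
      ((R * C).trace).re ≤ ((Q * C).trace).re := by
    intro R C hQR hC
    have h := trace_mul_re_nonneg hQR hC
    rw [Matrix.sub_mul, Matrix.trace_sub, Complex.sub_re] at h
    linarith
  have hQZ : ((Q * (A + B - (lam : ℂ) • 1)).trace).re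
      = ((Q * A).trace).re + ((Q * B).trace).re - lam * Q.trace.re := by
    rw [expand Q (A + B), Matrix.mul_add, Matrix.trace_add, Complex.add_re]
  calc posPartTrace X + posPartTrace Y
      = ((P * A).trace).re - lam * P.trace.re
        + (((P' * B).trace).re - lam * P'.trace.re) := by
        rw [hPX, hP'Y, hXdef, hYdef, expand P A, expand P' B]
    _ ≤ ((Q * A).trace).re - lam * P.trace.re
        + (((Q * B).trace).re - lam * P'.trace.re) := by
        have := hmono P A hQmP hA
        have := hmono P' B hQmP' hB
        linarith
    _ ≤ ((Q * (A + B - (lam : ℂ) • 1)).trace).re := by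
        rw [hQZ]
        have h5 := mul_le_mul_of_nonneg_left htraceQ hlam
        linarith
    _ ≤ posPartTrace (A + B - (lam : ℂ) • 1) := hup

lemma posSemidef_sum {m : ℕ} (A : Fin m → Matrix (Fin n) (Fin n) ℂ)
    (hA : ∀ i, (A i).PosSemidef) : (∑ i, A i).PosSemidef := by
  induction m with
  | zero =>
    simp only [Finset.univ_eq_empty, Finset.sum_empty]
    exact ⟨Matrix.isHermitian_zero, fun x => by simp⟩
  | succ m ih =>
    rw [Fin.sum_univ_succ]
    exact (hA 0).add (ih (fun i => A i.succ) (fun i => hA i.succ))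

set_option maxHeartbeats 1000000 in
lemma main_aux (lam : ℝ) (hlam : 0 ≤ lam) :
    ∀ (m : ℕ) (A : Fin m → Matrix (Fin n) (Fin n) ℂ), (∀ i, (A i).PosSemidef) →
      ∑ i, posPartTrace (A i - (lam : ℂ) • (1 : Matrix (Fin n) (Fin n) ℂ)) ≤
        posPartTrace ((∑ i, A i) - (lam : ℂ) • (1 : Matrix (Fin n) (Fin n) ℂ)) := by
  intro m
  induction m with
  | zero =>
    intro A hA
    simpa using posPartTrace_nonneg _
  | succ m ih =>
    intro A hA
    simp only [Fin.sum_univ_succ]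
    refine le_trans (add_le_add_right (ih (fun i => A i.succ) (fun i => hA i.succ)) _) ?_
    exact key (hA 0) (posSemidef_sum _ (fun i => hA i.succ)) lam hlam

end PPTAux

/-- For positive semidefinite `A₁, …, A_m` on a finite-dimensional Hilbert space and
`λ > 0`, one has `tr((∑ᵢ Aᵢ − λ·I)₊) ≥ ∑ᵢ tr((Aᵢ − λ·I)₊)`. -/
theorem posPartTrace_sum_sub_smul_one_ge {n m : ℕ}
    (A : Fin m → Matrix (Fin n) (Fin n) ℂ) (hA : ∀ i, (A i).PosSemidef)
    (lam : ℝ) (hlam : 0 < lam) :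
    ∑ i, posPartTrace (A i - (lam : ℂ) • (1 : Matrix (Fin n) (Fin n) ℂ)) ≤
      posPartTrace ((∑ i, A i) - (lam : ℂ) • (1 : Matrix (Fin n) (Fin n) ℂ)) :=
  PPTAux.main_aux lam hlam.le m A hA
end

section
/- Let p, q ∈ [0,1] with p ≥ 9q. Then the binary relative entropy satisfies p·log₂(p/q) + (1−p)·log₂((1−p)/(1−q)) ≥ p. -/
/-- Binary relative entropy `D((p,1−p) ‖ (q,1−q))` in base 2, valued in `EReal`:
it is `+∞` when `q = 0` while `p > 0`, and otherwise equals
`p·log₂(p/q) + (1−p)·log₂((1−p)/(1−q))` (with `Real.logb 2 0 = 0`, giving the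
convention `0·log₂(0/q) = 0`). -/
noncomputable def binRelEnt (p q : ℝ) : EReal :=
  if q = 0 ∧ 0 < p then ⊤
  else ((p * Real.logb 2 (p / q) + (1 - p) * Real.logb 2 ((1 - p) / (1 - q)) : ℝ) : EReal)

/-- For `p, q ∈ [0,1]` with `p ≥ 9q`, the binary relative entropy satisfies
`p·log₂(p/q) + (1−p)·log₂((1−p)/(1−q)) ≥ p`. -/
theorem binRelEnt_ge_of_ge_nine_mul
    (p q : ℝ) (hp : p ∈ Set.Icc (0 : ℝ) 1) (hq : q ∈ Set.Icc (0 : ℝ) 1)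
    (h : 9 * q ≤ p) :
    (p : EReal) ≤ binRelEnt p q := by
  obtain ⟨hp0, hp1⟩ := hp
  obtain ⟨hq0, hq1⟩ := hq
  unfold binRelEnt
  rcases eq_or_lt_of_le hq0 with hq | hq
  · rcases eq_or_lt_of_le hp0 with hp | hp
    · rw [if_neg (by simp [← hp])]
      simp [← hp, ← hq]
    · rw [if_pos ⟨hq.symm, hp⟩]
      exact le_top
  · -- q > 0
    have hp' : 0 < p := lt_of_lt_of_le (by linarith) h
    have hqlt : q < 1 := by nlinarith
    rw [if_neg (by rintro ⟨h1, _⟩; exact hq.ne' h1)]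
    rw [EReal.coe_le_coe_iff]
    have hL2 : 0 < Real.log 2 := Real.log_pos one_lt_two
    -- log 9 ≥ 1 + log 2
    have h45 : (1 : ℝ) ≤ Real.log 4.5 := by
      rw [Real.le_log_iff_exp_le (by norm_num)]
      have := Real.exp_one_lt_d9
      linarith
    have hlog9 : 1 + Real.log 2 ≤ Real.log 9 := by
      have : Real.log 9 = Real.log 4.5 + Real.log 2 := by
        rw [← Real.log_mul (by norm_num) (by norm_num)]; norm_num
      linarith
    -- first term
    have h9 : (9 : ℝ) ≤ p / q := (le_div_iff₀ hq).2 (by linarith)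
    have hfirst : p * Real.log 9 ≤ p * Real.log (p / q) :=
      mul_le_mul_of_nonneg_left (Real.log_le_log (by norm_num) h9) hp0
    -- second term: Gibbs
    have hsecond : q - p ≤ (1 - p) * Real.log ((1 - p) / (1 - q)) := by
      rcases eq_or_lt_of_le hp1 with hp1' | hp1'
      · rw [← hp1']
        simp
        linarith
      · have hxp : 0 < 1 - p := by linarith
        have hxq : 0 < 1 - q := by linarith
        have hlb := Real.log_le_sub_one_of_pos (show 0 < (1 - q) / (1 - p) by positivity)
        have hinv : Real.log ((1 - p) / (1 - q)) = -Real.log ((1 - q) / (1 - p)) := by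
          rw [Real.log_div hxp.ne' hxq.ne', Real.log_div hxq.ne' hxp.ne']; ring
        rw [hinv]
        have hkey : (1 - p) * ((1 - q) / (1 - p) - 1) = p - q := by
          field_simp
          ring
        nlinarith [mul_le_mul_of_nonneg_left hlb (le_of_lt hxp)]
    have hsum : p * Real.log 2 ≤
        p * Real.log (p / q) + (1 - p) * Real.log ((1 - p) / (1 - q)) := by
      nlinarith
    rw [Real.logb, Real.logb, ← mul_div_assoc, ← mul_div_assoc, ← add_div,
      le_div_iff₀ hL2]
    linarith
end

section
/- (Pinching inequality) Let A be a self-adjoint operator on a finite-dimensional complex Hilbert space with spectral projections P₁, …, P_r onto its distinct eigenvalues, and let E_A(X) = ∑ᵢ Pᵢ X Pᵢ be the associated pinching map. Then for every positive semidefinite operator σ, σ ≤ r · E_A(σ) in the Loewner order. -/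
open Matrix
open scoped ComplexOrder

lemma psd_smul_half {m : ℕ} {X : Matrix (Fin m) (Fin m) ℂ}
    (h : ((2:ℂ) • X).PosSemidef) : X.PosSemidef := by
  have hX : X = (2:ℂ)⁻¹ • ((2:ℂ) • X) := by
    rw [smul_smul]; norm_num
  rw [hX]
  refine ⟨?_, ?_⟩
  · unfold Matrix.IsHermitian
    rw [conjTranspose_smul, h.1.eq]
    norm_num
  · intro x
    have h2 : (0:ℂ) ≤ 2⁻¹ := by
      rw [show ((2:ℂ)⁻¹) = (((2:ℝ)⁻¹ : ℝ) : ℂ) by norm_num, Complex.zero_le_real]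
      norm_num
    exact (h.smul h2).2 x

lemma psd_sum {m : ℕ} {ι : Type*} (s : Finset ι) (f : ι → Matrix (Fin m) (Fin m) ℂ)
    (hf : ∀ i ∈ s, (f i).PosSemidef) : (∑ i ∈ s, f i).PosSemidef := by
  classical
  induction s using Finset.induction_on with
  | empty => simpa using Matrix.PosSemidef.zero
  | insert _ _ hns ih =>
    rename_i a s
    rw [Finset.sum_insert hns]
    exact (hf a (Finset.mem_insert_self a s)).add
      (ih fun i hi => hf i (Finset.mem_insert_of_mem hi))

/-- **Pinching inequality.** Let `A` be a self-adjoint operator with `r` distinct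
eigenvalues `μ₁, …, μ_r` and corresponding mutually orthogonal spectral projections
`P₁, …, P_r` summing to the identity, and let `E_A(X) = ∑ᵢ Pᵢ X Pᵢ` be the pinching
map. Then for every positive semidefinite `σ`, `σ ≤ r · E_A(σ)` in the Loewner
order, i.e. `r · ∑ᵢ Pᵢ σ Pᵢ − σ` is positive semidefinite. -/
theorem pinching_inequality {n r : ℕ}
    (A : Matrix (Fin n) (Fin n) ℂ) (hA : A.IsHermitian)
    (μ : Fin r → ℝ) (hμ : Function.Injective μ)
    (P : Fin r → Matrix (Fin n) (Fin n) ℂ)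
    (hproj : ∀ i, (P i) * (P i) = P i)
    (hherm : ∀ i, (P i)ᴴ = P i)
    (horth : ∀ i j, i ≠ j → (P i) * (P j) = 0)
    (hsum : ∑ i, P i = 1)
    (hspec : A = ∑ i, (μ i : ℂ) • P i)
    (σ : Matrix (Fin n) (Fin n) ℂ) (hσ : σ.PosSemidef) :
    ((r : ℂ) • (∑ i, P i * σ * P i) - σ).PosSemidef := by
  have hσid : ∑ i, ∑ j, P i * σ * P j = σ := by
    simp_rw [← Finset.mul_sum, hsum, mul_one]
    rw [← Finset.sum_mul, hsum, one_mul]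
  have key : (2:ℂ) • ((r : ℂ) • (∑ i, P i * σ * P i) - σ)
      = ∑ i, ∑ j, (P i - P j) * σ * (P i - P j) := by
    have expand : ∀ i j : Fin r, (P i - P j) * σ * (P i - P j)
        = P i * σ * P i + P j * σ * P j - P i * σ * P j - P j * σ * P i := by
      intro i j
      noncomm_ring
    simp only [expand, Finset.sum_sub_distrib, Finset.sum_add_distrib]
    have h1 : ∑ _i : Fin r, ∑ j : Fin r, P j * σ * P j
        = (r : ℂ) • ∑ j, P j * σ * P j := by
      simp [Finset.sum_const, Nat.cast_smul_eq_nsmul]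
    have h2 : (∑ i : Fin r, ∑ _j : Fin r, P i * σ * P i)
        = (r : ℂ) • ∑ i, P i * σ * P i := by
      rw [Finset.smul_sum]
      refine Finset.sum_congr rfl fun i _ => ?_
      simp [Finset.sum_const, Nat.cast_smul_eq_nsmul]
    have h3 : ∑ i : Fin r, ∑ j : Fin r, P j * σ * P i = σ := by
      rw [Finset.sum_comm]; exact hσid
    rw [h1, h2, h3, hσid]
    rw [two_smul]
    abel
  apply psd_smul_half
  rw [key]
  apply psd_sum
  intro i _
  apply psd_sum
  intro j _
  have := hσ.mul_mul_conjTranspose_same (P i - P j)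
  rwa [conjTranspose_sub, hherm, hherm] at this
end
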